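/- arXiv:1503.07299 — 6 statements merged into one kernel-verified Lean document; each statement's English description precedes it below -/
import Mathlib

section
/- If the integers satisfy L_1 ≥ L_2 ≥ ... ≥ L_k > 0, then the polynomial L_k·X^k + L_{k-1}·X^{k-1} + ... + L_1·X − 1 is irreducible over the rationals. -/
open Polynomial

section BrauerAux
open Finset

noncomputable def Complex.abs : AbsoluteValue ℂ ℝ where
  toFun z := ‖z‖
  map_mul' := norm_mul
  nonneg' := norm_nonneg
  eq_zero' _ := norm_eq_zero
  add_le' := norm_add_le

lemma Complex.abs_apply (z : ℂ) : Complex.abs z = ‖z‖ := rfl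

lemma Complex.abs_ofReal (r : ℝ) : Complex.abs (r : ℂ) = |r| := by
  simp [Complex.abs_apply]

lemma Complex.abs_natCast (n : ℕ) : Complex.abs (n : ℂ) = n := by
  simp [Complex.abs_apply]

lemma Complex.sq_abs (z : ℂ) : Complex.abs z ^ 2 = Complex.normSq z := by
  rw [Complex.abs_apply]; exact Complex.sq_norm z

lemma Complex.re_le_abs (z : ℂ) : z.re ≤ Complex.abs z := Complex.re_le_norm z

lemma aux_expand {R : Type*} [CommRing R] (k : ℕ) (hk : 1 ≤ k) (L : ℕ → ℕ) (u : R) :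
    (u - 1) * ((∑ i ∈ Icc 1 k, (L i : R) * u ^ i) - 1) =
      (∑ j ∈ Icc 2 k, ((L (j-1) : R) - (L j : R)) * u ^ j) + (L k : R) * u ^ (k+1)
        - ((L 1 : R) + 1) * u + 1 := by
  have h1 : ∑ i ∈ Icc 1 k, (L i : R) * u ^ (i+1)
      = ∑ j ∈ Icc 2 (k+1), (L (j-1) : R) * u ^ j := by
    rw [show (2:ℕ) = 1 + 1 from rfl, show k + 1 = k + 1 from rfl,
      ← Finset.map_add_right_Icc 1 k 1, Finset.sum_map]
    simp [addRightEmbedding_apply]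
  have h2 : ∑ j ∈ Icc 2 (k+1), (L (j-1) : R) * u ^ j
      = (∑ j ∈ Icc 2 k, (L (j-1) : R) * u ^ j) + (L k : R) * u ^ (k+1) := by
    rw [Finset.Icc_eq_cons_Ico (by omega : 2 ≤ k + 1), Finset.sum_cons, Finset.Ico_add_one_right_eq_Icc]
    simp only [Nat.add_sub_cancel]
    ring
  have h3 : ∑ i ∈ Icc 1 k, (L i : R) * u ^ i
      = (L 1 : R) * u + ∑ j ∈ Icc 2 k, (L j : R) * u ^ j := by
    rw [Finset.Icc_eq_cons_Ioc hk, Finset.sum_cons, ← Finset.Icc_add_one_left_eq_Ioc]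
    simp
  have key : u * (∑ i ∈ Icc 1 k, (L i : R) * u ^ i) = ∑ i ∈ Icc 1 k, (L i : R) * u ^ (i+1) := by
    rw [Finset.mul_sum]; congr 1; ext i; ring
  calc (u - 1) * ((∑ i ∈ Icc 1 k, (L i : R) * u ^ i) - 1)
      = u * (∑ i ∈ Icc 1 k, (L i : R) * u ^ i) - (∑ i ∈ Icc 1 k, (L i : R) * u ^ i) - u + 1 := by ring
    _ = _ := by
        have h4 : ∑ j ∈ Icc 2 k, ((L (j-1) : R) - (L j : R)) * u ^ j
            = (∑ j ∈ Icc 2 k, (L (j-1) : R) * u ^ j) - ∑ j ∈ Icc 2 k, (L j : R) * u ^ j := by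
          rw [← Finset.sum_sub_distrib]
          exact Finset.sum_congr rfl fun j _ => by ring
        rw [key, h1, h2, h3, h4]
        ring

lemma aux_telescope (k : ℕ) (hk : 1 ≤ k) (L : ℕ → ℕ) :
    ∑ j ∈ Icc 2 k, ((L (j-1) : ℝ) - (L j : ℝ)) = (L 1 : ℝ) - (L k : ℝ) := by
  induction k with
  | zero => omega
  | succ n ih =>
    rcases Nat.lt_or_ge n 1 with h | h
    · interval_cases n
      · simp
    · rw [Finset.Icc_eq_cons_Ico (by omega : 2 ≤ n + 1), Finset.sum_cons, Finset.Ico_add_one_right_eq_Icc,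
        ih h]
      simp only [Nat.add_sub_cancel]
      ring

set_option maxHeartbeats 1000000 in
lemma small_root (k : ℕ) (hk : 2 ≤ k) (L : ℕ → ℕ)
    (hmono : ∀ i j, 1 ≤ i → i ≤ j → j ≤ k → L j ≤ L i) (hpos : 1 ≤ L k)
    (z : ℂ) (hroot : ∑ i ∈ Icc 1 k, (L i : ℂ) * z ^ i = 1) (hz : Complex.abs z ≤ 1) :
    ∃ s : ℝ, 0 < s ∧ s < 1 ∧ z = (s : ℂ) := by
  have hk1 : 1 ≤ k := by omega
  have hL1 : 1 ≤ L 1 := le_trans hpos (hmono 1 k le_rfl hk1 le_rfl)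
  have hz0 : z ≠ 0 := by
    intro h
    rw [h] at hroot
    have : ∑ i ∈ Icc 1 k, (L i : ℂ) * (0:ℂ) ^ i = 0 :=
      Finset.sum_eq_zero fun i hi => by
        rw [zero_pow (by simp at hi; omega : i ≠ 0), mul_zero]
    rw [this] at hroot
    exact one_ne_zero hroot.symm
  obtain ⟨s, hs_def⟩ : ∃ s : ℝ, Complex.abs z = s := ⟨_, rfl⟩
  rw [hs_def] at hz
  have hs0 : 0 < s := hs_def ▸ Complex.abs.pos hz0
  -- each difference is nonneg
  have hd : ∀ j ∈ Icc 2 k, (0:ℝ) ≤ (L (j-1) : ℝ) - (L j : ℝ) := by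
    intro j hj
    simp only [Finset.mem_Icc] at hj
    have := hmono (j-1) j (by omega) (by omega) (by omega)
    have : (L j : ℝ) ≤ (L (j-1) : ℝ) := by exact_mod_cast this
    linarith
  -- term abs
  have habs_term : ∀ j ∈ Icc 2 k,
      Complex.abs (((L (j-1) : ℂ) - (L j : ℂ)) * z ^ j) = ((L (j-1) : ℝ) - (L j : ℝ)) * s ^ j := by
    intro j hj
    rw [map_mul, map_pow, hs_def]
    congr 1
    have : ((L (j-1) : ℂ) - (L j : ℂ)) = (((L (j-1) : ℝ) - (L j : ℝ) : ℝ) : ℂ) := by push_cast; ring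
    rw [this, Complex.abs_ofReal, abs_of_nonneg (hd j hj)]
  -- the complex identity
  have hC : ((L 1 : ℂ) + 1) * z
      = (∑ j ∈ Icc 2 k, ((L (j-1) : ℂ) - (L j : ℂ)) * z ^ j) + (L k : ℂ) * z ^ (k+1) + 1 := by
    have h0 : ((∑ i ∈ Icc 1 k, (L i : ℂ) * z ^ i) - 1) = 0 := by rw [hroot]; ring
    have := aux_expand k hk1 L z
    rw [h0, mul_zero] at this
    linear_combination this
  -- 1 ≤ g s
  have hg1 : (1:ℝ) ≤ ∑ i ∈ Icc 1 k, (L i : ℝ) * s ^ i := by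
    have h1 : Complex.abs (∑ i ∈ Icc 1 k, (L i : ℂ) * z ^ i) = 1 := by rw [hroot]; simp
    calc (1:ℝ) = Complex.abs (∑ i ∈ Icc 1 k, (L i : ℂ) * z ^ i) := h1.symm
      _ ≤ ∑ i ∈ Icc 1 k, Complex.abs ((L i : ℂ) * z ^ i) := Complex.abs.sum_le _ _
      _ = ∑ i ∈ Icc 1 k, (L i : ℝ) * s ^ i := by
          refine Finset.sum_congr rfl fun i hi => ?_
          rw [map_mul, map_pow, Complex.abs_natCast, hs_def]
  -- abs of sum bound
  have habsw : Complex.abs ((∑ j ∈ Icc 2 k, ((L (j-1) : ℂ) - (L j : ℂ)) * z ^ j)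
        + (L k : ℂ) * z ^ (k+1))
      ≤ (∑ j ∈ Icc 2 k, ((L (j-1) : ℝ) - (L j : ℝ)) * s ^ j) + (L k : ℝ) * s ^ (k+1) := by
    refine le_trans (Complex.abs.add_le _ _) ?_
    gcongr
    · refine le_trans (Complex.abs.sum_le _ _) ?_
      exact le_of_eq (Finset.sum_congr rfl habs_term)
    · rw [map_mul, map_pow, Complex.abs_natCast, hs_def]
  rcases lt_or_eq_of_le hz with hlt | heq
  · -- s < 1 case
    have hineq : ((L 1 : ℝ) + 1) * s
        ≤ (∑ j ∈ Icc 2 k, ((L (j-1) : ℝ) - (L j : ℝ)) * s ^ j) + (L k : ℝ) * s ^ (k+1) + 1 := by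
      have : Complex.abs (((L 1 : ℂ) + 1) * z) = ((L 1 : ℝ) + 1) * s := by
        rw [map_mul, hs_def]
        congr 1
        have : ((L 1 : ℂ) + 1) = (((L 1 : ℝ) + 1 : ℝ) : ℂ) := by push_cast; ring
        rw [this, Complex.abs_ofReal, abs_of_nonneg (by positivity)]
      rw [← this, hC]
      refine le_trans (Complex.abs.add_le _ _) ?_
      simp only [map_one]
      linarith [habsw]
    have hRid := aux_expand k hk1 L s
    -- (s-1)*(g-1) = rhs - (L1+1)s + ... derive g ≤ 1
    have hgle : (∑ i ∈ Icc 1 k, (L i : ℝ) * s ^ i) ≤ 1 := by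
      nlinarith [hineq, hRid, hlt]
    have hgeq : (∑ i ∈ Icc 1 k, (L i : ℝ) * s ^ i) = 1 := le_antisymm hgle hg1
    -- alignment: Re z = s
    have hre_sum : ∑ i ∈ Icc 1 k, ((L i : ℝ) * (z ^ i).re) = 1 := by
      have := congrArg Complex.re hroot
      rw [Complex.re_sum] at this
      simpa using this
    have hterm_nonneg : ∀ i ∈ Icc 1 k, (0:ℝ) ≤ (L i : ℝ) * (s ^ i - (z ^ i).re) := by
      intro i hi
      have h1 : (z ^ i).re ≤ s ^ i := by
        have := Complex.re_le_abs (z ^ i)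
        rwa [map_pow, hs_def] at this
      have : (0:ℝ) ≤ (L i : ℝ) := by positivity
      nlinarith
    have hsum0 : ∑ i ∈ Icc 1 k, (L i : ℝ) * (s ^ i - (z ^ i).re) = 0 := by
      have : ∑ i ∈ Icc 1 k, (L i : ℝ) * (s ^ i - (z ^ i).re)
          = (∑ i ∈ Icc 1 k, (L i : ℝ) * s ^ i) - ∑ i ∈ Icc 1 k, ((L i : ℝ) * (z ^ i).re) := by
        rw [← Finset.sum_sub_distrib]
        exact Finset.sum_congr rfl fun i _ => by ring
      rw [this, hgeq, hre_sum]; ring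
    have hall := (Finset.sum_eq_zero_iff_of_nonneg hterm_nonneg).mp hsum0
    have h1mem : (1:ℕ) ∈ Icc 1 k := by simp [hk1]
    have h1z := hall 1 h1mem
    have hre : z.re = s := by
      have hL1' : (0:ℝ) < (L 1 : ℝ) := by exact_mod_cast hL1
      have h3 : s ^ 1 - (z ^ 1).re = 0 := by
        rcases mul_eq_zero.mp h1z with h | h
        · exact absurd h (ne_of_gt hL1')
        · exact h
      simp only [pow_one] at h3
      linarith
    have him : z.im = 0 := by
      have h1 : s ^ 2 = z.re ^ 2 + z.im ^ 2 := by
        rw [← hs_def, Complex.sq_abs, Complex.normSq_apply]; ring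
      rw [hre] at h1
      nlinarith [sq_nonneg z.im]
    refine ⟨s, hs0, hlt, ?_⟩
    apply Complex.ext <;> simp [hre, him]
  · -- s = 1 case : contradiction
    exfalso
    obtain ⟨w, hw⟩ : ∃ w : ℂ, (∑ j ∈ Icc 2 k, ((L (j-1) : ℂ) - (L j : ℂ)) * z ^ j)
        + (L k : ℂ) * z ^ (k+1) = w := ⟨_, rfl⟩
    rw [hw] at hC habsw
    have hwle : Complex.abs w ≤ (L 1 : ℝ) := by
      refine le_trans habsw ?_
      rw [heq]
      simp only [one_pow, mul_one]
      rw [aux_telescope k hk1 L]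
      linarith
    have habs_lhs : Complex.abs (w + 1) = (L 1 : ℝ) + 1 := by
      rw [← hC, map_mul]
      have h2 : Complex.abs ((L 1 : ℂ) + 1) = (L 1 : ℝ) + 1 := by
        have : ((L 1 : ℂ) + 1) = (((L 1 : ℝ) + 1 : ℝ) : ℂ) := by push_cast; ring
        rw [this, Complex.abs_ofReal, abs_of_nonneg (by positivity)]
      rw [h2, hs_def, heq, mul_one]
    -- triangle equality forces w real nonneg with |w| = L 1
    have htri : Complex.abs (w + 1) ≤ Complex.abs w + 1 := by
      simpa using Complex.abs.add_le w 1
    have hweq : Complex.abs w = (L 1 : ℝ) := by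
      rw [habs_lhs] at htri; linarith
    have htr_eq : Complex.abs (w + 1) = Complex.abs w + 1 := by rw [habs_lhs, hweq]
    have hre_w : w.re = Complex.abs w := by
      have h1 : (Complex.abs (w+1))^2 = Complex.normSq (w+1) := Complex.sq_abs _
      have h2 : (Complex.abs w)^2 = Complex.normSq w := Complex.sq_abs _
      rw [htr_eq] at h1
      rw [Complex.normSq_apply] at h1 h2
      simp only [Complex.add_re, Complex.add_im, Complex.one_re, Complex.one_im] at h1
      nlinarith [h1, h2]
    have him_w : w.im = 0 := by
      have h2 : (Complex.abs w)^2 = w.re^2 + w.im^2 := by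
        rw [Complex.sq_abs, Complex.normSq_apply]; ring
      rw [hre_w] at h2
      nlinarith
    have hw_eq : w = ((L 1 : ℝ) : ℂ) := by
      apply Complex.ext
      · rw [hre_w, hweq]; simp
      · simp [him_w]
    -- z = 1
    have hz1 : z = 1 := by
      have h1 : ((L 1 : ℂ) + 1) * z = ((L 1 : ℂ) + 1) * 1 := by
        rw [hC, hw_eq]; push_cast; ring
      have h2 : ((L 1 : ℂ) + 1) ≠ 0 := by
        have h3 : ((L 1 : ℂ) + 1) = ((L 1 + 1 : ℕ) : ℂ) := by push_cast; ring
        rw [h3]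
        exact Nat.cast_ne_zero.mpr (by omega)
      exact mul_left_cancel₀ h2 h1
    -- contradiction: sum of L i = 1 but ≥ k ≥ 2
    rw [hz1] at hroot
    simp only [one_pow, mul_one] at hroot
    have hsum : ((∑ i ∈ Icc 1 k, L i : ℕ) : ℂ) = ((1:ℕ) : ℂ) := by push_cast; simpa using hroot
    have hsum' : ∑ i ∈ Icc 1 k, L i = 1 := Nat.cast_injective hsum
    have hge : k ≤ ∑ i ∈ Icc 1 k, L i := by
      calc k = ∑ i ∈ Icc 1 k, 1 := by simp
        _ ≤ ∑ i ∈ Icc 1 k, L i := by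
            refine Finset.sum_le_sum fun i hi => ?_
            simp only [Finset.mem_Icc] at hi
            exact le_trans hpos (hmono i k hi.1 hi.2 le_rfl)
    omega

-- uniqueness of positive real root
lemma root_unique (k : ℕ) (hk : 1 ≤ k) (L : ℕ → ℕ) (hL1 : 1 ≤ L 1)
    {s t : ℝ} (hs : 0 < s) (ht : 0 < t)
    (hgs : ∑ i ∈ Icc 1 k, (L i : ℝ) * s ^ i = 1) (hgt : ∑ i ∈ Icc 1 k, (L i : ℝ) * t ^ i = 1) :
    s = t := by
  have key : ∀ u v : ℝ, 0 < u → u < v →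
      (∑ i ∈ Icc 1 k, (L i : ℝ) * u ^ i) < ∑ i ∈ Icc 1 k, (L i : ℝ) * v ^ i := by
    intro u v hu huv
    apply Finset.sum_lt_sum
    · intro i hi
      have h1 : u ^ i ≤ v ^ i := pow_le_pow_left₀ hu.le huv.le i
      have h2 : (0:ℝ) ≤ (L i : ℝ) := by positivity
      nlinarith
    · refine ⟨1, by simp [hk], ?_⟩
      have h1 : (1:ℝ) ≤ (L 1 : ℝ) := by exact_mod_cast hL1
      simp only [pow_one]
      nlinarith
  rcases lt_trichotomy s t with h | h | h
  · have := key s t hs h; rw [hgs, hgt] at this; linarith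
  · exact h
  · have := key t s ht h; rw [hgs, hgt] at this; linarith

noncomputable def pZ (k : ℕ) (L : ℕ → ℕ) : Polynomial ℤ :=
  (∑ i ∈ Icc 1 k, C (L i : ℤ) * X ^ i) - 1

lemma pZ_coeff (k : ℕ) (L : ℕ → ℕ) (n : ℕ) :
    (pZ k L).coeff n = (if n ∈ Icc 1 k then (L n : ℤ) else 0) - (if n = 0 then 1 else 0) := by
  simp only [pZ, coeff_sub, finset_sum_coeff, coeff_C_mul, coeff_X_pow, mul_ite, mul_one,
    mul_zero, Finset.sum_ite_eq' (Icc 1 k) n fun i => (L i : ℤ), coeff_one]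
  congr 1
  simp [eq_comm]

lemma pZ_coeff_zero (k : ℕ) (L : ℕ → ℕ) : (pZ k L).coeff 0 = -1 := by
  rw [pZ_coeff]; simp

lemma pZ_natDegree (k : ℕ) (hk : 1 ≤ k) (L : ℕ → ℕ) (hpos : 1 ≤ L k) :
    (pZ k L).natDegree = k := by
  apply le_antisymm
  · rw [natDegree_le_iff_coeff_eq_zero]
    intro n hn
    rw [pZ_coeff]
    have h1 : n ∉ Icc 1 k := by simp; omega
    have h2 : n ≠ 0 := by omega
    simp [h1, h2]
  · apply le_natDegree_of_ne_zero
    rw [pZ_coeff]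
    have h1 : k ∈ Icc 1 k := by simp [hk]
    have h2 : k ≠ 0 := by omega
    simp [h1, h2]
    omega

lemma pZ_ne_zero (k : ℕ) (hk : 1 ≤ k) (L : ℕ → ℕ) : pZ k L ≠ 0 := by
  intro h
  have := pZ_coeff_zero k L
  rw [h] at this
  simp at this

lemma pZ_primitive (k : ℕ) (L : ℕ → ℕ) : (pZ k L).IsPrimitive := by
  intro r hr
  have := (C_dvd_iff_dvd_coeff r (pZ k L)).mp hr 0
  rw [pZ_coeff_zero] at this
  exact isUnit_of_dvd_unit this isUnit_one.neg

lemma pZ_map_Q (k : ℕ) (L : ℕ → ℕ) :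
    (pZ k L).map (Int.castRingHom ℚ) = (∑ i ∈ Icc 1 k, C ((L i : ℚ)) * X ^ i) - 1 := by
  simp [pZ, Polynomial.map_sub, Polynomial.map_sum]

lemma pC_eval (k : ℕ) (L : ℕ → ℕ) (z : ℂ) :
    ((pZ k L).map (Int.castRingHom ℂ)).eval z = (∑ i ∈ Icc 1 k, (L i : ℂ) * z ^ i) - 1 := by
  simp [pZ, Polynomial.map_sub, Polynomial.map_sum, eval_finset_sum]

lemma pC_deriv_eval (k : ℕ) (hk : 1 ≤ k) (L : ℕ → ℕ) (hL1 : 1 ≤ L 1) (s : ℝ) (hs : 0 < s) :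
    ((pZ k L).map (Int.castRingHom ℂ)).derivative.eval (s : ℂ) ≠ 0 := by
  have hmap : (pZ k L).map (Int.castRingHom ℂ)
      = (∑ i ∈ Icc 1 k, C ((L i : ℂ)) * X ^ i) - 1 := by
    simp [pZ, Polynomial.map_sub, Polynomial.map_sum]
  have hval : ((pZ k L).map (Int.castRingHom ℂ)).derivative.eval (s : ℂ)
      = ∑ i ∈ Icc 1 k, (L i : ℂ) * (i : ℂ) * (s : ℂ) ^ (i - 1) := by
    rw [hmap]
    rw [derivative_sub, derivative_one, sub_zero, derivative_sum]
    rw [eval_finset_sum]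
    refine Finset.sum_congr rfl fun i hi => ?_
    rw [derivative_C_mul_X_pow]
    simp [mul_comm]
  rw [hval]
  have hcast : ∑ i ∈ Icc 1 k, (L i : ℂ) * (i : ℂ) * (s : ℂ) ^ (i - 1)
      = (((∑ i ∈ Icc 1 k, (L i : ℝ) * (i : ℝ) * s ^ (i - 1)) : ℝ) : ℂ) := by
    push_cast
    rfl
  rw [hcast]
  rw [Complex.ofReal_ne_zero]
  have hpos' : (0:ℝ) < ∑ i ∈ Icc 1 k, (L i : ℝ) * (i : ℝ) * s ^ (i - 1) := by
    apply Finset.sum_pos'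
    · intro i hi
      positivity
    · refine ⟨1, by simp [hk], ?_⟩
      have : (1:ℝ) ≤ (L 1 : ℝ) := by exact_mod_cast hL1
      simp
      nlinarith
  exact ne_of_gt hpos'

lemma one_lt_multiset_prod (s : Multiset ℝ) (h : ∀ x ∈ s, (1:ℝ) < x) (hs : s ≠ 0) :
    1 < s.prod := by
  induction s using Multiset.induction with
  | empty => simp at hs
  | cons a t ih =>
    rw [Multiset.prod_cons]
    rcases eq_or_ne t 0 with rfl | ht
    · simpa using h a (by simp)
    · have h1 := h a (by simp)
      have h2 := ih (fun x hx => h x (by simp [hx])) ht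
      nlinarith

lemma exists_small_root (a : Polynomial ℤ) (ha : 1 ≤ a.natDegree)
    (ha0 : a.coeff 0 = 1 ∨ a.coeff 0 = -1) :
    ∃ z : ℂ, (a.map (Int.castRingHom ℂ)).IsRoot z ∧ Complex.abs z ≤ 1 := by
  by_contra hcon
  push_neg at hcon
  set aC := a.map (Int.castRingHom ℂ) with haC_def
  have hane : a ≠ 0 := by
    intro h; rw [h] at ha; simp at ha
  have hinj : Function.Injective (Int.castRingHom ℂ) := fun x y h => Int.cast_injective h
  have haC : aC ≠ 0 := (Polynomial.map_ne_zero_iff hinj).mpr hane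
  have hdeg : aC.natDegree = a.natDegree := natDegree_map_eq_of_injective hinj a
  have hsplit : aC.Splits := IsAlgClosed.splits aC
  have hprod := hsplit.eq_prod_roots
  have heval := congrArg (eval 0) hprod
  rw [eval_mul, eval_C, eval_multiset_prod, Multiset.map_map] at heval
  have heval2 : aC.eval 0 = aC.leadingCoeff * (aC.roots.map fun r => -r).prod := by
    rw [heval]
    exact congrArg (fun m => aC.leadingCoeff * Multiset.prod m)
      (Multiset.map_congr rfl fun r _ => by simp)
  have habs : Complex.abs (aC.eval 0)
      = Complex.abs aC.leadingCoeff * ((aC.roots.map fun r => -r).map Complex.abs).prod := by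
    rw [heval2, map_mul, ← map_multiset_prod]
  -- |eval 0| = 1
  have h01 : Complex.abs (aC.eval 0) = 1 := by
    have : aC.eval 0 = ((a.coeff 0 : ℤ) : ℂ) := by
      rw [haC_def, eval_map]
      simp [eval₂_at_zero]
    rw [this]
    rcases ha0 with h | h <;> rw [h] <;> simp
  -- |lead| ≥ 1
  have hlead : 1 ≤ Complex.abs aC.leadingCoeff := by
    have h1 : aC.leadingCoeff = ((a.leadingCoeff : ℤ) : ℂ) := by
      rw [haC_def, leadingCoeff_map_of_injective hinj]; rfl
    have h2 : a.leadingCoeff ≠ 0 := leadingCoeff_ne_zero.mpr hane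
    rw [h1]
    rw [show ((a.leadingCoeff : ℤ) : ℂ) = ((a.leadingCoeff : ℝ) : ℂ) by push_cast; rfl]
    rw [Complex.abs_ofReal]
    rw [← Int.cast_abs]
    have : 1 ≤ |a.leadingCoeff| := Int.one_le_abs h2
    exact_mod_cast this
  -- roots nonempty
  have hcard : aC.roots.card = a.natDegree := by
    have h1 := hsplit.natDegree_eq_card_roots
    omega
  have hroots_ne : aC.roots ≠ 0 := by
    intro h
    rw [h] at hcard
    simp at hcard
    omega
  have hprod_gt : 1 < ((aC.roots.map fun r => -r).map Complex.abs).prod := by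
    apply one_lt_multiset_prod
    · intro x hx
      simp only [Multiset.mem_map] at hx
      obtain ⟨y, hy, rfl⟩ := hx
      obtain ⟨r, hr, rfl⟩ := hy
      rw [map_neg_eq_map]
      exact hcon r (isRoot_of_mem_roots hr)
    · intro h
      apply hroots_ne
      rwa [Multiset.map_eq_zero, Multiset.map_eq_zero] at h
  rw [h01] at habs
  nlinarith [hlead, hprod_gt, habs]



lemma pZ_irred (k : ℕ) (hk : 2 ≤ k) (L : ℕ → ℕ)
    (hmono : ∀ i j, 1 ≤ i → i ≤ j → j ≤ k → L j ≤ L i) (hpos : 1 ≤ L k) :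
    Irreducible (pZ k L) := by
  have hk1 : 1 ≤ k := by omega
  have hL1 : 1 ≤ L 1 := le_trans hpos (hmono 1 k le_rfl hk1 le_rfl)
  constructor
  · intro hu
    have := natDegree_eq_zero_of_isUnit hu
    rw [pZ_natDegree k hk1 L hpos] at this
    omega
  · intro a b hab
    by_contra hcon
    push_neg at hcon
    obtain ⟨ha, hb⟩ := hcon
    have hc0 : a.coeff 0 * b.coeff 0 = -1 := by
      have h1 := congrArg (fun p => Polynomial.coeff p 0) hab
      rw [pZ_coeff_zero, mul_coeff_zero] at h1
      exact h1.symm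
    have haunit0 : IsUnit (a.coeff 0) := by
      apply isUnit_of_mul_isUnit_left (y := b.coeff 0)
      rw [hc0]; exact isUnit_one.neg
    have hbunit0 : IsUnit (b.coeff 0) := by
      apply isUnit_of_mul_isUnit_right (x := a.coeff 0)
      rw [hc0]; exact isUnit_one.neg
    have hadeg : 1 ≤ a.natDegree := by
      by_contra h
      push_neg at h
      have h0 : a.natDegree = 0 := by omega
      apply ha
      rw [eq_C_of_natDegree_eq_zero h0]
      exact (isUnit_C).mpr haunit0
    have hbdeg : 1 ≤ b.natDegree := by
      by_contra h
      push_neg at h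
      have h0 : b.natDegree = 0 := by omega
      apply hb
      rw [eq_C_of_natDegree_eq_zero h0]
      exact (isUnit_C).mpr hbunit0
    -- small roots of both factors
    obtain ⟨za, hza_root, hza_abs⟩ := exists_small_root a hadeg (Int.isUnit_iff.mp haunit0)
    obtain ⟨zb, hzb_root, hzb_abs⟩ := exists_small_root b hbdeg (Int.isUnit_iff.mp hbunit0)
    have hmapC : (pZ k L).map (Int.castRingHom ℂ)
        = (a.map (Int.castRingHom ℂ)) * (b.map (Int.castRingHom ℂ)) := by
      rw [hab, Polynomial.map_mul]
    -- za, zb are roots of p over ℂ, hence equal to a common real s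
    have hza_p : ∑ i ∈ Icc 1 k, (L i : ℂ) * za ^ i = 1 := by
      have h1 : ((pZ k L).map (Int.castRingHom ℂ)).eval za = 0 := by
        rw [hmapC, eval_mul, hza_root.eq_zero, zero_mul]
      rw [pC_eval] at h1
      linear_combination h1
    have hzb_p : ∑ i ∈ Icc 1 k, (L i : ℂ) * zb ^ i = 1 := by
      have h1 : ((pZ k L).map (Int.castRingHom ℂ)).eval zb = 0 := by
        rw [hmapC, eval_mul, hzb_root.eq_zero, mul_zero]
      rw [pC_eval] at h1
      linear_combination h1
    obtain ⟨sa, hsa0, hsa1, hza_eq⟩ := small_root k hk L hmono hpos za hza_p hza_abs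
    obtain ⟨sb, hsb0, hsb1, hzb_eq⟩ := small_root k hk L hmono hpos zb hzb_p hzb_abs
    -- real root equations
    have hga : ∑ i ∈ Icc 1 k, (L i : ℝ) * sa ^ i = 1 := by
      rw [hza_eq] at hza_p
      have h2 : (((∑ i ∈ Icc 1 k, (L i : ℝ) * sa ^ i) : ℝ) : ℂ) = ((1:ℝ) : ℂ) := by
        push_cast
        exact hza_p
      exact_mod_cast h2
    have hgb : ∑ i ∈ Icc 1 k, (L i : ℝ) * sb ^ i = 1 := by
      rw [hzb_eq] at hzb_p
      have h2 : (((∑ i ∈ Icc 1 k, (L i : ℝ) * sb ^ i) : ℝ) : ℂ) = ((1:ℝ) : ℂ) := by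
        push_cast
        exact hzb_p
      exact_mod_cast h2
    have hs_eq : sa = sb := root_unique k hk1 L hL1 hsa0 hsb0 hga hgb
    -- double root
    have hdvd_a : (X - C ((sa:ℂ))) ∣ a.map (Int.castRingHom ℂ) :=
      dvd_iff_isRoot.mpr (hza_eq ▸ hza_root)
    have hdvd_b : (X - C ((sa:ℂ))) ∣ b.map (Int.castRingHom ℂ) := by
      refine dvd_iff_isRoot.mpr ?_
      rw [hs_eq, ← hzb_eq]
      exact hzb_root
    obtain ⟨a', ha'⟩ := hdvd_a
    obtain ⟨b', hb'⟩ := hdvd_b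
    have hfact : (pZ k L).map (Int.castRingHom ℂ) = (X - C ((sa:ℂ)))^2 * (a' * b') := by
      rw [hmapC, ha', hb']; ring
    have hderiv0 : ((pZ k L).map (Int.castRingHom ℂ)).derivative.eval ((sa:ℂ)) = 0 := by
      rw [hfact, derivative_mul, derivative_pow]
      simp
    exact pC_deriv_eval k hk1 L hL1 sa hsa0 hderiv0



/-- If the integers satisfy L_1 ≥ L_2 ≥ ... ≥ L_k > 0, then the polynomial
L_k·X^k + ... + L_1·X − 1 is irreducible over the rationals. -/
theorem stmt1 (k : ℕ) (hk : 1 ≤ k) (L : ℕ → ℕ)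
    (hmono : ∀ i j, 1 ≤ i → i ≤ j → j ≤ k → L j ≤ L i) (hpos : 1 ≤ L k) :
    Irreducible ((∑ i ∈ Finset.Icc 1 k, Polynomial.C ((L i : ℚ)) * Polynomial.X ^ i) - 1) := by
  rcases eq_or_lt_of_le hk with hk1 | hk2
  · have hkk : k = 1 := hk1.symm
    subst hkk
    simp only [Finset.Icc_self, Finset.sum_singleton, pow_one]
    have ha : (L 1 : ℚ) ≠ 0 := Nat.cast_ne_zero.mpr (by omega)
    have hdeg : degree (C (L 1 : ℚ) * X - 1) = 1 := by
      rw [degree_sub_eq_left_of_degree_lt, degree_C_mul_X ha]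
      rw [degree_C_mul_X ha, degree_one]
      decide
    exact irreducible_of_degree_eq_one hdeg
  · have h := pZ_irred k hk2 L hmono hpos
    rw [← pZ_map_Q k L]
    exact (Polynomial.IsPrimitive.Int.irreducible_iff_irreducible_map_cast (pZ_primitive k L)).mp h

end BrauerAux
end

section
/- If L_1 ≥ L_2 ≥ ... ≥ L_k > 0 are integers, then the reciprocal 1/β of the unique root β ∈ (0,1) of L_1·X + ... + L_k·X^k = 1 is a Pisot number: it is a real algebraic integer greater than 1 all of whose other Galois conjugates have absolute value strictly less than 1. -/
open Finset Polynomial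

private lemma identA (βc w : ℂ) :
    ∀ (n : ℕ) (d' L' : ℕ → ℂ),
      (∀ m, m < n → d' m = L' (m + 1) + βc * d' (m + 1)) → d' n = 0 →
      (βc - w) * (∑ m ∈ range n, d' m * w ^ m)
        + ∑ m ∈ range n, L' (m + 1) * w ^ (m + 1) = βc * d' 0 := by
  intro n
  induction n with
  | zero => intro d' L' _ h0; simp [h0]
  | succ n ih =>
    intro d' L' hrec hend
    have key := ih (fun m => d' (m + 1)) (fun m => L' (m + 1))
      (fun m hm => hrec (m + 1) (by omega)) hend
    have hT : ∑ m ∈ range (n + 1), d' m * w ^ m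
        = d' 0 + w * ∑ m ∈ range n, d' (m + 1) * w ^ m := by
      rw [Finset.sum_range_succ' (fun m => d' m * w ^ m) n, Finset.mul_sum, pow_zero,
        mul_one, add_comm]
      congr 1
      exact Finset.sum_congr rfl fun m _ => by ring
    have hS : ∑ m ∈ range (n + 1), L' (m + 1) * w ^ (m + 1)
        = L' 1 * w + w * ∑ m ∈ range n, L' (m + 1 + 1) * w ^ (m + 1) := by
      rw [Finset.sum_range_succ' (fun m => L' (m + 1) * w ^ (m + 1)) n, Finset.mul_sum,
        add_comm]
      congr 1
      · norm_num
      · exact Finset.sum_congr rfl fun m _ => by ring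
    rw [hT, hS]
    have h0 := hrec 0 (by omega)
    linear_combination w * key - w * h0

private lemma identB (w : ℂ) :
    ∀ (n : ℕ) (d' : ℕ → ℂ), d' n = 0 →
      (1 - w) * ∑ m ∈ range n, d' m * w ^ m
        = d' 0 - ∑ m ∈ range n, (d' m - d' (m + 1)) * w ^ (m + 1) := by
  intro n
  induction n with
  | zero => intro d' h0; simp [h0]
  | succ n ih =>
    intro d' hend
    have key := ih (fun m => d' (m + 1)) hend
    have hT : ∑ m ∈ range (n + 1), d' m * w ^ m
        = d' 0 + w * ∑ m ∈ range n, d' (m + 1) * w ^ m := by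
      rw [Finset.sum_range_succ' (fun m => d' m * w ^ m) n, Finset.mul_sum, pow_zero,
        mul_one, add_comm]
      congr 1
      exact Finset.sum_congr rfl fun m _ => by ring
    have hU : ∑ m ∈ range (n + 1), (d' m - d' (m + 1)) * w ^ (m + 1)
        = (d' 0 - d' 1) * w
          + w * ∑ m ∈ range n, (d' (m + 1) - d' (m + 1 + 1)) * w ^ (m + 1) := by
      rw [Finset.sum_range_succ' (fun m => (d' m - d' (m + 1)) * w ^ (m + 1)) n,
        Finset.mul_sum, add_comm]
      congr 1
      · norm_num
      · exact Finset.sum_congr rfl fun m _ => by ring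
    rw [hT, hU]
    linear_combination w * key

/-- If L_1 ≥ L_2 ≥ ... ≥ L_k > 0 are integers, then the reciprocal 1/β of the unique root
β ∈ (0,1) of L_1·X + ... + L_k·X^k = 1 is a Pisot number: a real algebraic integer greater
than 1 all of whose other Galois conjugates (i.e. complex roots of its minimal polynomial)
have absolute value strictly less than 1. -/
theorem stmt2 (k : ℕ) (hk : 1 ≤ k) (L : ℕ → ℕ)
    (hmono : ∀ i j, 1 ≤ i → i ≤ j → j ≤ k → L j ≤ L i) (hpos : 1 ≤ L k)
    (β : ℝ) (hβ0 : 0 < β) (hβ1 : β < 1)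
    (hroot : ∑ i ∈ Finset.Icc 1 k, (L i : ℝ) * β ^ i = 1) :
    IsIntegral ℤ β⁻¹ ∧ 1 < β⁻¹ ∧
      ∀ z : ℂ, Polynomial.aeval z (minpoly ℚ β⁻¹) = 0 → z ≠ ((β⁻¹ : ℝ) : ℂ) →
        ‖z‖ < 1 := by
  have hβne : β ≠ 0 := ne_of_gt hβ0
  have hβinv : (0:ℝ) < β⁻¹ := inv_pos.mpr hβ0
  have h1β : 1 < β⁻¹ := by nlinarith [mul_inv_cancel₀ hβne]
  have hLk : ∀ i, 1 ≤ i → i ≤ k → (1:ℝ) ≤ (L i : ℝ) := by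
    intro i h1 h2
    exact_mod_cast le_trans hpos (hmono i k h1 h2 le_rfl)
  -- the integer polynomial
  set p : Polynomial ℤ :=
    Polynomial.X ^ k - ∑ i ∈ Finset.Icc 1 k, Polynomial.C ((L i : ℤ)) * Polynomial.X ^ (k - i)
    with hp
  have hpmonic : p.Monic := by
    apply Polynomial.monic_X_pow_sub
    apply lt_of_le_of_lt (Polynomial.degree_sum_le _ _)
    rw [Finset.sup_lt_iff (by exact_mod_cast WithBot.bot_lt_coe k)]
    intro i hi
    rw [Finset.mem_Icc] at hi
    calc (Polynomial.C ((L i : ℤ)) * Polynomial.X ^ (k - i)).degree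
        ≤ (Polynomial.C ((L i : ℤ))).degree + (Polynomial.X ^ (k - i) : Polynomial ℤ).degree :=
          Polynomial.degree_mul_le _ _
      _ ≤ 0 + (k - i : ℕ) := by
          exact add_le_add Polynomial.degree_C_le (le_of_eq (Polynomial.degree_X_pow _))
      _ < (k : WithBot ℕ) := by
          rw [zero_add]
          exact_mod_cast Nat.sub_lt (by omega) (by omega)
  have hkey : ∀ i ∈ Finset.Icc 1 k, (β⁻¹) ^ (k - i) = β⁻¹ ^ k * β ^ i := by
    intro i hi
    rw [Finset.mem_Icc] at hi
    rw [pow_sub₀ _ (inv_ne_zero hβne) hi.2]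
    field_simp
    rw [one_div_pow, one_div_mul_cancel (pow_ne_zero _ hβne)]
  have hpβ : Polynomial.aeval β⁻¹ p = 0 := by
    simp only [hp, map_sub, map_sum, map_mul, Polynomial.aeval_X_pow, Polynomial.aeval_C,
      map_natCast]
    have : ∑ i ∈ Finset.Icc 1 k, (L i : ℝ) * β⁻¹ ^ (k - i)
        = β⁻¹ ^ k * ∑ i ∈ Finset.Icc 1 k, (L i : ℝ) * β ^ i := by
      rw [Finset.mul_sum]
      exact Finset.sum_congr rfl fun i hi => by rw [hkey i hi]; ring
    rw [this, hroot, mul_one, sub_self]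
  have hint : IsIntegral ℤ β⁻¹ := ⟨p, hpmonic, by rw [← Polynomial.aeval_def]; exact hpβ⟩
  refine ⟨hint, h1β, ?_⟩
  intro z hz hzne
  -- z is a root of p over ℂ
  have hdvd : minpoly ℚ β⁻¹ ∣ p.map (algebraMap ℤ ℚ) :=
    minpoly.dvd ℚ β⁻¹ (by rw [Polynomial.aeval_map_algebraMap]; exact hpβ)
  have hzp : Polynomial.aeval z (p.map (algebraMap ℤ ℚ)) = 0 := by
    obtain ⟨q, hq⟩ := hdvd
    rw [hq, map_mul, hz, zero_mul]
  rw [Polynomial.aeval_map_algebraMap] at hzp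
  have hzp' : (z : ℂ) ^ k = ∑ i ∈ Finset.Icc 1 k, (L i : ℂ) * z ^ (k - i) := by
    simp only [hp, map_sub, map_sum, map_mul, Polynomial.aeval_X_pow, Polynomial.aeval_C,
      map_natCast] at hzp
    linear_combination hzp
  have hz0 : z ≠ 0 := by
    intro h
    rw [h] at hzp'
    rw [Finset.sum_eq_single_of_mem k (Finset.mem_Icc.mpr ⟨hk, le_rfl⟩)
      (fun i hi hik => by
        rw [Finset.mem_Icc] at hi
        rw [zero_pow (by omega : k - i ≠ 0), mul_zero])] at hzp'
    rw [Nat.sub_self, pow_zero, mul_one, zero_pow (by omega : k ≠ 0)] at hzp'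
    have : (L k : ℂ) ≠ 0 := Nat.cast_ne_zero.mpr (by omega)
    exact this hzp'.symm
  -- suppose |z| ≥ 1
  by_contra hlt
  push_neg at hlt
  set w : ℂ := z⁻¹ with hwdef
  have hw0 : w ≠ 0 := inv_ne_zero hz0
  have hwabs : ‖w‖ ≤ 1 := by
    rw [hwdef, norm_inv]
    exact inv_le_one_of_one_le₀ hlt
  have hwβ : w ≠ (β : ℂ) := by
    intro h
    apply hzne
    rw [← inv_inv z, ← hwdef, h, ← Complex.ofReal_inv]
  have hw : ∑ i ∈ Finset.Icc 1 k, (L i : ℂ) * w ^ i = 1 := by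
    have hzk : ∀ i ∈ Finset.Icc 1 k, z ^ (k - i) = z ^ k * w ^ i := by
      intro i hi
      rw [Finset.mem_Icc] at hi
      rw [pow_sub₀ _ hz0 hi.2, hwdef, inv_pow]
    have : ∑ i ∈ Finset.Icc 1 k, (L i : ℂ) * z ^ (k - i)
        = z ^ k * ∑ i ∈ Finset.Icc 1 k, (L i : ℂ) * w ^ i := by
      rw [Finset.mul_sum]
      exact Finset.sum_congr rfl fun i hi => by rw [hzk i hi]; ring
    rw [this] at hzp'
    have hzkne : (z : ℂ) ^ k ≠ 0 := pow_ne_zero _ hz0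
    field_simp at hzp'
    exact hzp'.symm
  -- the auxiliary coefficients
  set d : ℕ → ℝ := fun j => ∑ m ∈ Finset.range (k - j), (L (j + 1 + m) : ℝ) * β ^ m with hd
  have hdk : d k = 0 := by simp [hd]
  have hdnonneg : ∀ j, 0 ≤ d j := by
    intro j
    apply Finset.sum_nonneg
    intro m _
    positivity
  have hdrec : ∀ j, j < k → d j = (L (j + 1) : ℝ) + β * d (j + 1) := by
    intro j hj
    have hkj : k - j = (k - (j + 1)) + 1 := by omega
    rw [hd]
    simp only []
    rw [hkj, Finset.sum_range_succ' (fun m => (L (j + 1 + m) : ℝ) * β ^ m), Finset.mul_sum]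
    simp only [add_zero, pow_zero, mul_one]
    rw [add_comm]
    congr 1
    apply Finset.sum_congr rfl
    intro m _
    rw [show j + 1 + (m + 1) = j + 1 + 1 + m by omega]
    ring
  have hdpos : ∀ j, j < k → 0 < d j := by
    intro j hj
    rw [hdrec j hj]
    have h1 := hLk (j + 1) (by omega) (by omega)
    nlinarith [hdnonneg (j + 1)]
  have hgeom : ∀ n : ℕ, (1 - β) * ∑ m ∈ Finset.range n, β ^ m = 1 - β ^ n := by
    intro n
    linear_combination (-1 : ℝ) * geom_sum_mul β n
  have hddec : ∀ j, j < k → d (j + 1) < d j := by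
    intro j hj
    have hbound : d (j + 1) * (1 - β) < (L (j + 1) : ℝ) := by
      have h1 : d (j + 1) ≤ (L (j + 1) : ℝ) * ∑ m ∈ Finset.range (k - (j + 1)), β ^ m := by
        rw [hd]
        simp only []
        rw [Finset.mul_sum]
        apply Finset.sum_le_sum
        intro m hm
        rw [Finset.mem_range] at hm
        have hLle : (L (j + 1 + 1 + m) : ℝ) ≤ (L (j + 1) : ℝ) := by
          exact_mod_cast hmono (j + 1) (j + 1 + 1 + m) (by omega) (by omega) (by omega)
        have hb : (0:ℝ) ≤ β ^ m := by positivity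
        nlinarith
      have h2 := hgeom (k - (j + 1))
      have h3 : (0:ℝ) < β ^ (k - (j + 1)) := by positivity
      have hL := hLk (j + 1) (by omega) (by omega)
      have hβ' : (0:ℝ) ≤ 1 - β := by linarith
      nlinarith [mul_le_mul_of_nonneg_right h1 hβ']
    rw [hdrec j hj]
    nlinarith
  have hβd0 : β * d 0 = 1 := by
    rw [← hroot, hd]
    simp only []
    rw [Finset.mul_sum, show Finset.Icc 1 k = Finset.Ico 1 (k + 1) by rw [Finset.Ico_add_one_right_eq_Icc],
      Finset.sum_Ico_eq_sum_range]
    simp only [Nat.add_sub_cancel]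
    apply Finset.sum_congr rfl
    intro m _
    rw [show 0 + 1 + m = 1 + m by omega]
    ring
  -- complex identities
  have hAc := identA (β : ℂ) w k (fun j => ((d j : ℝ) : ℂ)) (fun i => ((L i : ℕ) : ℂ))
    (fun m hm => by
      show ((d m : ℝ) : ℂ) = ((L (m + 1) : ℕ) : ℂ) + ((β : ℝ) : ℂ) * ((d (m + 1) : ℝ) : ℂ)
      exact_mod_cast hdrec m hm)
    (by show ((d k : ℝ) : ℂ) = 0; exact_mod_cast hdk)
  have hw' : ∑ m ∈ Finset.range k, ((L (m + 1) : ℕ) : ℂ) * w ^ (m + 1) = 1 := by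
    rw [← hw, show Finset.Icc 1 k = Finset.Ico 1 (k + 1) by rw [Finset.Ico_add_one_right_eq_Icc],
      Finset.sum_Ico_eq_sum_range]
    simp only [Nat.add_sub_cancel]
    apply Finset.sum_congr rfl
    intro m _
    rw [show 1 + m = m + 1 by omega]
  have hβd0c : (β : ℂ) * ((d 0 : ℝ) : ℂ) = 1 := by
    rw [← Complex.ofReal_mul, hβd0, Complex.ofReal_one]
  rw [hw', hβd0c] at hAc
  have hDw : ∑ m ∈ Finset.range k, ((d m : ℝ) : ℂ) * w ^ m = 0 := by
    have hsub : ((β : ℝ) : ℂ) - w ≠ 0 := sub_ne_zero.mpr (Ne.symm hwβ)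
    have hmul : (((β : ℝ) : ℂ) - w) * (∑ m ∈ Finset.range k, ((d m : ℝ) : ℂ) * w ^ m) = 0 := by
      linear_combination hAc
    exact (mul_eq_zero.mp hmul).resolve_left hsub
  have hBc := identB w k (fun j => ((d j : ℝ) : ℂ))
    (by show ((d k : ℝ) : ℂ) = 0; exact_mod_cast hdk)
  rw [hDw, mul_zero] at hBc
  have hU : ((d 0 : ℝ) : ℂ)
      = ∑ m ∈ Finset.range k, (((d m : ℝ) : ℂ) - ((d (m + 1) : ℝ) : ℂ)) * w ^ (m + 1) := by
    linear_combination -hBc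
  have hU' : ((d 0 : ℝ) : ℂ)
      = ∑ m ∈ Finset.range k, ((d m - d (m + 1) : ℝ) : ℂ) * w ^ (m + 1) := by
    rw [hU]
    exact Finset.sum_congr rfl fun m _ => by push_cast; ring
  have hre : d 0 = ∑ m ∈ Finset.range k, (d m - d (m + 1)) * (w ^ (m + 1)).re := by
    have hh := congrArg Complex.re hU'
    rw [Complex.re_sum] at hh
    simpa [Complex.mul_re, Complex.ofReal_re, Complex.ofReal_im] using hh
  have hedge : ∀ m, m < k → 0 ≤ d m - d (m + 1) := by
    intro m hm
    have := hddec m hm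
    linarith
  have habsw : ∀ m : ℕ, (w ^ (m + 1)).re ≤ ‖w‖ := by
    intro m
    calc (w ^ (m + 1)).re ≤ ‖w ^ (m + 1)‖ := Complex.re_le_norm _
      _ = ‖w‖ ^ (m + 1) := norm_pow _ _
      _ ≤ ‖w‖ ^ 1 :=
          pow_le_pow_of_le_one (norm_nonneg _) hwabs (by omega)
      _ = ‖w‖ := pow_one _
  have hsum_e : ∑ m ∈ Finset.range k, (d m - d (m + 1)) = d 0 := by
    rw [Finset.sum_range_sub' d k, hdk, sub_zero]
  have hd0 : 0 < d 0 := hdpos 0 (by omega)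
  have h1w : d 0 ≤ d 0 * ‖w‖ := by
    calc d 0 = ∑ m ∈ Finset.range k, (d m - d (m + 1)) * (w ^ (m + 1)).re := hre
      _ ≤ ∑ m ∈ Finset.range k, (d m - d (m + 1)) * ‖w‖ := by
          apply Finset.sum_le_sum
          intro m hm
          rw [Finset.mem_range] at hm
          exact mul_le_mul_of_nonneg_left (habsw m) (hedge m hm)
      _ = (∑ m ∈ Finset.range k, (d m - d (m + 1))) * ‖w‖ := by
          rw [Finset.sum_mul]
      _ = d 0 * ‖w‖ := by rw [hsum_e]
  have habs1 : ‖w‖ = 1 := by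
    apply le_antisymm hwabs
    nlinarith
  have hrew : w.re = 1 := by
    by_contra hne
    have hle : w.re ≤ 1 := by
      calc w.re ≤ ‖w‖ := Complex.re_le_norm w
        _ = 1 := habs1
    have hlt' : w.re < 1 := lt_of_le_of_ne hle hne
    have hstrict : ∑ m ∈ Finset.range k, (d m - d (m + 1)) * (w ^ (m + 1)).re
        < ∑ m ∈ Finset.range k, (d m - d (m + 1)) * 1 := by
      apply Finset.sum_lt_sum
      · intro m hm
        rw [Finset.mem_range] at hm
        apply mul_le_mul_of_nonneg_left _ (hedge m hm)
        calc (w ^ (m + 1)).re ≤ ‖w ^ (m + 1)‖ := Complex.re_le_norm _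
          _ = ‖w‖ ^ (m + 1) := norm_pow _ _
          _ = 1 := by rw [habs1, one_pow]
      · refine ⟨0, Finset.mem_range.mpr (by omega), ?_⟩
        have he0 : 0 < d 0 - d 1 := by
          have := hddec 0 (by omega)
          linarith
        have : (w ^ (0 + 1)).re = w.re := by rw [zero_add, pow_one]
        rw [this]
        nlinarith
    rw [← hre] at hstrict
    simp only [mul_one] at hstrict
    rw [hsum_e] at hstrict
    exact lt_irrefl _ hstrict
  have hw1 : w = 1 := by
    have h2 : ‖w‖ ^ 2 = 1 := by rw [habs1]; norm_num
    rw [Complex.sq_norm, Complex.normSq_apply, hrew] at h2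
    have him2 : w.im * w.im = 0 := by linarith
    have him : w.im = 0 := mul_self_eq_zero.mp him2
    apply Complex.ext <;> simp [hrew, him]
  rw [hw1] at hDw
  simp only [one_pow, mul_one] at hDw
  have hsum0 : (∑ m ∈ Finset.range k, d m : ℝ) = 0 := by
    have hc : ((∑ m ∈ Finset.range k, d m : ℝ) : ℂ) = 0 := by
      push_cast
      exact hDw
    exact_mod_cast hc
  have hsumpos : 0 < ∑ m ∈ Finset.range k, d m :=
    Finset.sum_pos' (fun m _ => hdnonneg m) ⟨0, Finset.mem_range.mpr (by omega), hd0⟩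
  linarith
end

section
/- For all n ≥ 1 and all m ≥ 1, the inequality l_{n,1} + l_{n,2} + ... + l_{n,m} ≥ l_{n-1,1} + l_{n-1,2} + ... + l_{n-1,m+1} holds. -/
/-- For all n ≥ 1 and all m ≥ 1, the inequality
l_{n,1} + ... + l_{n,m} ≥ l_{n-1,1} + ... + l_{n-1,m+1} holds. -/
theorem stmt4 (k : ℕ) (hk : 1 ≤ k) (L : ℕ → ℕ) (hL1 : 1 ≤ L 1) (hLk : 1 ≤ L k)
    (l : ℕ → ℕ → ℕ)
    (h01 : l 0 1 = 1) (h0j : ∀ j, 2 ≤ j → j ≤ k → l 0 j = 0)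
    (hbig : ∀ n j, k < j → l n j = 0)
    (hrec : ∀ n, 1 ≤ n → ∀ i, 1 ≤ i → i < k → l n i = l (n-1) (i+1) + L i * l (n-1) 1)
    (hreck : ∀ n, 1 ≤ n → l n k = L k * l (n-1) 1) :
    ∀ n, 1 ≤ n → ∀ m, 1 ≤ m →
      ∑ i ∈ Finset.Icc 1 (m+1), l (n-1) i ≤ ∑ i ∈ Finset.Icc 1 m, l n i := by
  intro n hn
  -- main case: 1 ≤ m ≤ k
  have main : ∀ m, 1 ≤ m → m ≤ k →
      ∑ i ∈ Finset.Icc 1 (m+1), l (n-1) i ≤ ∑ i ∈ Finset.Icc 1 m, l n i := by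
    intro m hm hmk
    have key : ∀ i ∈ Finset.Icc 1 m,
        l (n-1) (i+1) + (if i = 1 then l (n-1) 1 else 0) ≤ l n i := by
      intro i hi
      simp only [Finset.mem_Icc] at hi
      rcases lt_or_eq_of_le (hi.2.trans hmk) with hik | hik
      · rw [hrec n hn i hi.1 hik]
        rcases eq_or_ne i 1 with rfl | h1
        · rw [if_pos rfl]
          have : l (n-1) 1 ≤ L 1 * l (n-1) 1 := Nat.le_mul_of_pos_left _ hL1
          omega
        · rw [if_neg h1]; omega
      · -- i = k
        subst hik
        rw [hreck n hn]
        have hz : l (n-1) (i+1) = 0 := hbig _ _ (by omega)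
        rcases eq_or_ne i 1 with rfl | h1
        · rw [if_pos rfl, hz]
          have : l (n-1) 1 ≤ L 1 * l (n-1) 1 := Nat.le_mul_of_pos_left _ hL1
          omega
        · rw [if_neg h1, hz]
          have : l (n-1) 1 ≤ L i * l (n-1) 1 := Nat.le_mul_of_pos_left _ hLk
          omega
    calc ∑ i ∈ Finset.Icc 1 (m+1), l (n-1) i
        = ∑ i ∈ Finset.Icc 1 m, (l (n-1) (i+1) + if i = 1 then l (n-1) 1 else 0) := by
          rw [Finset.sum_add_distrib, Finset.sum_ite_eq' (Finset.Icc 1 m) 1 (fun _ => l (n-1) 1),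
            if_pos (by simp [Finset.mem_Icc, hm])]
          have hmap : Finset.Icc 2 (m+1) = (Finset.Icc 1 m).map (addRightEmbedding 1) := by
            rw [Finset.map_add_right_Icc]
          have : ∑ i ∈ Finset.Icc 1 (m+1), l (n-1) i
              = ∑ i ∈ Finset.Icc 2 (m+1), l (n-1) i + l (n-1) 1 := by
            rw [← Finset.sum_Ioc_add_eq_sum_Icc (show (1:ℕ) ≤ m+1 by omega), ← Finset.Icc_add_one_left_eq_Ioc]
            rfl
          rw [this, hmap, Finset.sum_map]
          rfl
      _ ≤ ∑ i ∈ Finset.Icc 1 m, l n i := Finset.sum_le_sum key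
  intro m hm
  rcases le_or_gt m k with h | h
  · exact main m hm h
  · have e1 : ∑ i ∈ Finset.Icc 1 m, l n i = ∑ i ∈ Finset.Icc 1 k, l n i := by
      symm
      apply Finset.sum_subset (Finset.Icc_subset_Icc_right h.le)
      intro x hx hx'
      simp only [Finset.mem_Icc] at hx hx'
      exact hbig n x (by omega)
    have e2 : ∑ i ∈ Finset.Icc 1 (m+1), l (n-1) i = ∑ i ∈ Finset.Icc 1 (k+1), l (n-1) i := by
      symm
      apply Finset.sum_subset (Finset.Icc_subset_Icc_right (by omega))
      intro x hx hx'
      simp only [Finset.mem_Icc] at hx hx'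
      exact hbig (n-1) x (by omega)
    rw [e1, e2]
    exact main k hk le_rfl
end

section
/- In every representation produced by the greedy digit algorithm, each digit η_i satisfies 0 ≤ η_i ≤ L_1 + L_2 + ... + L_k − 2. -/
/-- In every representation produced by the greedy digit algorithm, each digit η_i satisfies
0 ≤ η_i ≤ L_1 + ... + L_k − 2.  The greedy algorithm is encoded by hypotheses on the
functions `Nv` (the remainders N_m), `T`, `eps` (ε) and `eta` (η), and `J m` is the number
of consecutive zero ε's directly above index m. -/
theorem stmt6 (k : ℕ) (hk : 1 ≤ k) (L : ℕ → ℕ) (hL1 : 1 ≤ L 1) (hLk : 1 ≤ L k)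
    (hS : 2 ≤ ∑ i ∈ Finset.Icc 1 k, L i)
    (l : ℕ → ℕ → ℕ)
    (h01 : l 0 1 = 1) (h0j : ∀ j, 2 ≤ j → l 0 j = 0)
    (hbig : ∀ n j, k < j → l n j = 0)
    (hrec : ∀ n, 1 ≤ n → ∀ i, 1 ≤ i → i < k → l n i = l (n-1) (i+1) + L i * l (n-1) 1)
    (hreck : ∀ n, 1 ≤ n → l n k = L k * l (n-1) 1)
    (t : ℕ → ℕ) (ht : ∀ n, t n = ∑ i ∈ Finset.Icc 1 k, l n i)
    (N n : ℕ) (hN1 : t n ≤ N) (hN2 : N < t (n+1))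
    (Nv : ℕ → ℤ) (T : ℕ → ℕ) (eps eta J : ℕ → ℕ)
    (hNn : Nv n = N) (hTn : T n = t n) (hepsn : eps n = 1)
    (hetan : (eta n : ℤ) = ((N : ℤ) - (t n : ℤ)) / (l n 1 : ℤ))
    (hJ : ∀ m, m < n → (∀ r, 1 ≤ r → r ≤ J m → eps (m + r) = 0) ∧ eps (m + J m + 1) = 1)
    (hT : ∀ m, m < n → T m = ∑ i ∈ Finset.Icc 1 (J m + 2), l m i)
    (hNv : ∀ m, m < n →
      Nv m = Nv (m+1) - (eps (m+1) : ℤ) * (T (m+1) : ℤ) - (eta (m+1) : ℤ) * (l (m+1) 1 : ℤ))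
    (hbr0 : ∀ m, m < n → Nv m < (T m : ℤ) → eps m = 0 ∧ eta m = 0)
    (hbr1 : ∀ m, m < n → (T m : ℤ) ≤ Nv m →
      eps m = 1 ∧ (eta m : ℤ) = (Nv m - (T m : ℤ)) / (l m 1 : ℤ)) :
    ∀ i, i ≤ n → eta i ≤ (∑ r ∈ Finset.Icc 1 k, L r) - 2 := by
  set S := ∑ r ∈ Finset.Icc 1 k, L r with hSdef
  have hL1S : L 1 ≤ S :=
    Finset.single_le_sum (f := L) (fun i _ => Nat.zero_le _) (Finset.mem_Icc.mpr ⟨le_rfl, hk⟩)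
  -- l m 1 ≥ 1 for all m
  have hl1 : ∀ m, 1 ≤ l m 1 := by
    intro m
    induction m with
    | zero => rw [h01]
    | succ m ih =>
      rcases eq_or_lt_of_le hk with hk1 | hk2
      · have e := hreck (m+1) (by omega)
        rw [← hk1] at e
        simp only [Nat.add_sub_cancel] at e
        rw [e]
        exact Nat.one_le_iff_ne_zero.mpr (Nat.mul_ne_zero (by omega) (by omega))
      · have e := hrec (m+1) (by omega) 1 le_rfl hk2
        simp only [Nat.add_sub_cancel] at e
        rw [e]
        have : 1 * 1 ≤ L 1 * l m 1 := Nat.mul_le_mul hL1 ih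
        omega
  -- per-term recursion
  have hstep : ∀ m i, 1 ≤ i →
      l (m+1) i = l m (i+1) + (if i ≤ k then L i else 0) * l m 1 := by
    intro m i hi
    rcases lt_trichotomy i k with h | h | h
    · have e := hrec (m+1) (by omega) i hi h
      simp only [Nat.add_sub_cancel] at e
      rw [e, if_pos h.le]
    · subst h
      have e := hreck (m+1) (by omega)
      simp only [Nat.add_sub_cancel] at e
      rw [e, hbig m (i+1) (by omega), if_pos le_rfl]
      omega
    · rw [hbig (m+1) i h, hbig m (i+1) (by omega), if_neg (by omega)]
      simp
  -- sum identity
  have hsum : ∀ m p, 1 ≤ p →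
      (∑ i ∈ Finset.Icc 1 p, l (m+1) i) + l m 1 =
      (∑ i ∈ Finset.Icc 1 (p+1), l m i) +
        (∑ i ∈ (Finset.Icc 1 p).filter (· ≤ k), L i) * l m 1 := by
    intro m p hp
    have e1 : ∑ i ∈ Finset.Icc 1 p, l (m+1) i =
        ∑ i ∈ Finset.Icc 1 p, (l m (i+1) + (if i ≤ k then L i else 0) * l m 1) :=
      Finset.sum_congr rfl fun i hi => hstep m i (Finset.mem_Icc.mp hi).1
    rw [e1, Finset.sum_add_distrib, ← Finset.sum_mul, ← Finset.sum_filter]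
    have e2 : ∑ i ∈ Finset.Icc 1 p, l m (i+1) = ∑ i ∈ Finset.Icc 2 (p+1), l m i := by
      rw [show Finset.Icc 2 (p+1) = (Finset.Icc 1 p).map (addRightEmbedding 1) by
        rw [Finset.map_add_right_Icc], Finset.sum_map]
      rfl
    have e3 : ∑ i ∈ Finset.Icc 1 (p+1), l m i = l m 1 + ∑ i ∈ Finset.Icc 2 (p+1), l m i := by
      rw [show Finset.Icc 1 (p+1) = insert 1 (Finset.Icc 2 (p+1)) from
          Finset.ext fun x => by simp only [Finset.mem_insert, Finset.mem_Icc]; omega,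
        Finset.sum_insert (by simp)]
    rw [e2, e3]
    omega
  -- (A)
  have hA : ∀ m, t (m+1) + l m 1 = t m + S * l m 1 := by
    intro m
    have e := hsum m k hk
    rw [Finset.filter_true_of_mem (fun i hi => (Finset.mem_Icc.mp hi).2)] at e
    rw [Finset.sum_Icc_succ_top (by omega), hbig m (k+1) (by omega)] at e
    rw [ht, ht, hSdef]
    omega
  -- (B)
  have hB : ∀ m p, 1 ≤ p →
      (∑ i ∈ Finset.Icc 1 p, l (m+1) i) + l m 1 ≤
      (∑ i ∈ Finset.Icc 1 (p+1), l m i) + S * l m 1 := by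
    intro m p hp
    have e := hsum m p hp
    have hsub : (Finset.Icc 1 p).filter (· ≤ k) ⊆ Finset.Icc 1 k := by
      intro x hx
      simp only [Finset.mem_filter, Finset.mem_Icc] at hx ⊢
      exact ⟨hx.1.1, hx.2⟩
    have hle : (∑ i ∈ (Finset.Icc 1 p).filter (· ≤ k), L i) ≤ S :=
      Finset.sum_le_sum_of_subset hsub
    have := Nat.mul_le_mul_right (l m 1) hle
    omega
  -- key: eta formula at any index with eps = 1
  have hkey : ∀ m, m ≤ n → eps m = 1 →
      (T m : ℤ) ≤ Nv m ∧ (eta m : ℤ) = (Nv m - (T m : ℤ)) / (l m 1 : ℤ) := by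
    intro m hm he
    rcases eq_or_lt_of_le hm with rfl | hmn
    · refine ⟨by rw [hNn, hTn]; exact_mod_cast hN1, ?_⟩
      rw [hetan, hNn, hTn]
    · have hle : (T m : ℤ) ≤ Nv m := by
        by_contra h
        push_neg at h
        have := (hbr0 m hmn h).1
        omega
      exact ⟨hle, (hbr1 m hmn hle).2⟩
  intro i hi
  have hS2 : 2 ≤ S := hS
  rcases eq_or_lt_of_le hi with rfl | hin
  · -- top case
    have hb : (0:ℤ) < (l i 1 : ℤ) := by exact_mod_cast hl1 i
    have hAi := hA i
    have h2 : (N:ℤ) < (t (i+1) : ℤ) := by exact_mod_cast hN2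
    have hAc : (t (i+1) : ℤ) + (l i 1 : ℤ) = (t i : ℤ) + (S:ℤ) * (l i 1 : ℤ) := by
      exact_mod_cast hAi
    have hlt : (N:ℤ) - (t i : ℤ) < ((S:ℤ) - 1) * (l i 1 : ℤ) := by nlinarith
    have : (eta i : ℤ) < (S:ℤ) - 1 := by
      rw [hetan]
      exact Int.ediv_lt_of_lt_mul hb (by linarith)
    omega
  · -- i < n
    by_cases hle : (T i : ℤ) ≤ Nv i
    · have hb : (0:ℤ) < (l i 1 : ℤ) := by exact_mod_cast hl1 i
      -- strict bound on Nv i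
      have hcase : eps (i+1) = 1 ∨
          (i+1 < n ∧ eps (i+1) = 0 ∧ eta (i+1) = 0 ∧ Nv (i+1) < (T (i+1) : ℤ)) := by
        rcases eq_or_lt_of_le (Nat.succ_le_of_lt hin) with h | h
        · have h' : i + 1 = n := by omega
          left; rw [h']; exact hepsn
        · have h' : i + 1 < n := by omega
          by_cases hc : (T (i+1) : ℤ) ≤ Nv (i+1)
          · left; exact (hbr1 (i+1) h' hc).1
          · push_neg at hc
            exact Or.inr ⟨h', (hbr0 _ h' hc).1, (hbr0 _ h' hc).2, hc⟩
      have hstrict : Nv i + (l i 1 : ℤ) < (T i : ℤ) + (S:ℤ) * (l i 1 : ℤ) := by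
        rcases hcase with hA1 | ⟨hin1, hA0, heta0, hlt1⟩
        · -- J i = 0
          have hJ0 : J i = 0 := by
            by_contra h
            have := (hJ i hin).1 1 le_rfl (by omega)
            omega
          have hTi : T i = l i 1 + l i 2 := by
            rw [hT i hin, hJ0]
            rw [show Finset.Icc 1 (0+2) = {1, 2} by rfl]
            rw [Finset.sum_insert (by simp), Finset.sum_singleton]
          have hk1 := hkey (i+1) (by omega) hA1
          have hNvi := hNv i hin
          rw [hA1] at hNvi
          have hb1 : (0:ℤ) < (l (i+1) 1 : ℤ) := by exact_mod_cast hl1 (i+1)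
          have hmod : Nv i = (Nv (i+1) - (T (i+1) : ℤ)) % (l (i+1) 1 : ℤ) := by
            rw [hNvi, hk1.2, Int.emod_def]
            push_cast
            ring
          have h1 : Nv i < (l (i+1) 1 : ℤ) := by
            rw [hmod]; exact Int.emod_lt_of_pos _ hb1
          have h2 : l (i+1) 1 + l i 1 ≤ T i + S * l i 1 := by
            have e : l (i+1) 1 = l i 2 + L 1 * l i 1 := by
              have e0 := hstep i 1 le_rfl
              rw [if_pos hk] at e0
              simpa using e0
            have := Nat.mul_le_mul_right (l i 1) hL1S
            omega
          have h2c : (l (i+1) 1 : ℤ) + (l i 1 : ℤ) ≤ (T i : ℤ) + (S:ℤ) * (l i 1 : ℤ) := by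
            exact_mod_cast h2
          linarith
        · -- eps (i+1) = 0
          have hNvi : Nv i = Nv (i+1) := by
            rw [hNv i hin, hA0, heta0]
            push_cast
            ring
          obtain ⟨hz, ho⟩ := hJ i hin
          obtain ⟨hz', ho'⟩ := hJ (i+1) hin1
          have hJeq : J i = J (i+1) + 1 := by
            by_contra hne
            rcases Nat.lt_or_ge (J i) (J (i+1) + 1) with h | h
            · have hJi1 : 1 ≤ J i := by
                by_contra h'
                have hJ0 : J i = 0 := by omega
                rw [hJ0] at ho
                simp only [Nat.add_zero] at ho
                omega
              have hz2 := hz' (J i) hJi1 (by omega)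
              rw [show i + 1 + J i = i + J i + 1 by omega] at hz2
              omega
            
            · have hz2 := hz (J (i+1) + 2) (by omega) (by omega)
              rw [show i + (J (i+1) + 2) = i + 1 + J (i+1) + 1 by omega] at hz2
              omega
          have hTT : T (i+1) + l i 1 ≤ T i + S * l i 1 := by
            rw [hT i hin, hT (i+1) hin1, hJeq]
            have := hB i (J (i+1) + 2) (by omega)
            rw [show J (i+1) + 2 + 1 = J (i+1) + 1 + 2 by omega] at this
            exact this
          have hTTc : (T (i+1) : ℤ) + (l i 1 : ℤ) ≤ (T i : ℤ) + (S:ℤ) * (l i 1 : ℤ) := by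
            exact_mod_cast hTT
          linarith
      have heta := (hbr1 i hin hle).2
      have : (eta i : ℤ) < (S:ℤ) - 1 := by
        rw [heta]
        refine Int.ediv_lt_of_lt_mul hb ?_
        nlinarith
      omega
    · push_neg at hle
      have := (hbr0 i hin hle).2
      omega
end

section
/- For the identity (L_1 + ... + L_{m-1} − 1)·l_{n,1} + (l_{n,1} + ... + l_{n,m}) = l_{n+1,1} + ... + l_{n+1,m-1} holds for all n ≥ 0 and 2 ≤ m ≤ k. -/
/-- The identity (L_1 + ... + L_{m-1} − 1)·l_{n,1} + (l_{n,1} + ... + l_{n,m})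
= l_{n+1,1} + ... + l_{n+1,m-1} holds for all n ≥ 0 and 2 ≤ m ≤ k. -/
theorem stmt11 (k : ℕ) (hk : 2 ≤ k) (L : ℕ → ℕ) (hL1 : 1 ≤ L 1) (hLk : 1 ≤ L k)
    (l : ℕ → ℕ → ℕ)
    (h01 : l 0 1 = 1) (h0j : ∀ j, 2 ≤ j → j ≤ k → l 0 j = 0)
    (hrec : ∀ n, 1 ≤ n → ∀ i, 1 ≤ i → i < k → l n i = l (n-1) (i+1) + L i * l (n-1) 1)
    (hreck : ∀ n, 1 ≤ n → l n k = L k * l (n-1) 1) :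
    ∀ n, ∀ m, 2 ≤ m → m ≤ k →
      ((∑ r ∈ Finset.Icc 1 (m-1), L r) - 1) * l n 1 + ∑ r ∈ Finset.Icc 1 m, l n r
        = ∑ r ∈ Finset.Icc 1 (m-1), l (n+1) r := by
  intro n m hm hmk
  have key : ∀ r ∈ Finset.Icc 1 (m-1), l (n+1) r = l n (r+1) + L r * l n 1 := by
    intro r hr
    simp only [Finset.mem_Icc] at hr
    have := hrec (n+1) (by omega) r (by omega) (by omega)
    simpa using this
  rw [Finset.sum_congr rfl key, Finset.sum_add_distrib, ← Finset.sum_mul]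
  have hshift : ∑ r ∈ Finset.Icc 1 (m-1), l n (r+1) = ∑ r ∈ Finset.Icc 2 m, l n r := by
    have hset : Finset.Icc 2 m = (Finset.Icc 1 (m-1)).map ⟨fun x => x + 1, add_left_injective 1⟩ := by
      ext x
      simp only [Finset.mem_map, Finset.mem_Icc, Function.Embedding.coeFn_mk]
      constructor
      · intro hx; exact ⟨x - 1, by omega, by omega⟩
      · rintro ⟨a, ha, rfl⟩; omega
    rw [hset, Finset.sum_map]; rfl
  rw [hshift]
  have hsplit : ∑ r ∈ Finset.Icc 1 m, l n r = l n 1 + ∑ r ∈ Finset.Icc 2 m, l n r := by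
    have : Finset.Icc 1 m = insert 1 (Finset.Icc 2 m) := by
      ext x; simp [Finset.mem_Icc]; omega
    rw [this, Finset.sum_insert (by simp)]
  rw [hsplit]
  have hS : 1 ≤ ∑ r ∈ Finset.Icc 1 (m-1), L r := by
    calc 1 ≤ L 1 := hL1
    _ ≤ _ := Finset.single_le_sum (f := L) (fun _ _ => Nat.zero_le _)
          (by simp [Finset.mem_Icc]; omega)
  set S := ∑ r ∈ Finset.Icc 1 (m-1), L r
  obtain ⟨T, hT⟩ : ∃ T, S = T + 1 := ⟨S - 1, by omega⟩
  rw [hT]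
  simp only [Nat.add_sub_cancel]
  ring
end

section
/- For the classical LS-sequence with L ≥ S ≥ 1, the normalized limiting discrepancy constant satisfies, for fixed S as L → ∞, the asymptotic ((2L+S−2)/|log β|)·(R̃/(1−Sβ) + 1) ~ 2L/log L, where R̃ = max{|τ_1|, |τ_1 + (L+S−2)λ_1|} with τ_1 = (−L−2S+√(L²+4S))/(2√(L²+4S)), λ_1 = (−L+√(L²+4S))/(2√(L²+4S)), and β = (−L+√(L²+4S))/(2S). -/
open Filter

private lemma lemA (s x : ℝ) (hs : 1 ≤ s) (hx : 2 ≤ x) : x < Real.sqrt (x^2 + 4*s) := by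
  rw [Real.lt_sqrt (by linarith)]; nlinarith

private lemma lemB (s x : ℝ) (hs : 1 ≤ s) (hx : 2 ≤ x) :
    Real.sqrt (x^2 + 4*s) ≤ x + 2*s/x := by
  have hx0 : (0:ℝ) < x := by linarith
  have h : x^2 + 4*s ≤ (x + 2*s/x)^2 := by
    have h2 : (x + 2*s/x)^2 = x^2 + 4*s + 4*s^2/x^2 := by field_simp; ring
    have h3 : (0:ℝ) ≤ 4*s^2/x^2 := by positivity
    rw [h2]; linarith
  calc Real.sqrt (x^2+4*s) ≤ Real.sqrt ((x + 2*s/x)^2) := Real.sqrt_le_sqrt h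
    _ = x + 2*s/x := Real.sqrt_sq (by positivity)

private lemma lemC (s x : ℝ) (hs : 1 ≤ s) (hx : 2 ≤ x) :
    x + 2*s/(x+s) ≤ Real.sqrt (x^2 + 4*s) := by
  rw [Real.le_sqrt (by positivity) (by positivity)]
  have hxs : (0:ℝ) < x + s := by linarith
  have key : (x + 2*s/(x+s))^2 = x^2 + 4*s*x/(x+s) + 4*s^2/(x+s)^2 := by
    field_simp; ring
  rw [key]
  have h1 : 4*s*x/(x+s) + 4*s^2/(x+s)^2 ≤ 4*s := by
    rw [div_add_div _ _ (ne_of_gt hxs) (by positivity), div_le_iff₀ (by positivity)]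
    have h2 : (0:ℝ) ≤ 4*s^2*(x+s)*(x+s-1) := by
      apply mul_nonneg (mul_nonneg (by positivity) (le_of_lt hxs)); linarith
    nlinarith [h2]
  linarith

noncomputable def rtF (S L : ℕ) : ℝ := Real.sqrt ((L:ℝ)^2 + 4*(S:ℝ))
noncomputable def betF (S L : ℕ) : ℝ := (-(L:ℝ) + rtF S L) / (2*(S:ℝ))
noncomputable def tauF (S L : ℕ) : ℝ := (-(L:ℝ) - 2*(S:ℝ) + rtF S L) / (2 * rtF S L)
noncomputable def lamF (S L : ℕ) : ℝ := (-(L:ℝ) + rtF S L) / (2 * rtF S L)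
noncomputable def RRF (S L : ℕ) : ℝ :=
  max |tauF S L| |tauF S L + ((L:ℝ)+(S:ℝ)-2) * lamF S L|

set_option maxHeartbeats 1000000 in
/-- For the classical LS-sequence with L ≥ S ≥ 1 and S fixed, as L → ∞ the discrepancy
constant satisfies ((2L+S−2)/|log β|)·(R̃/(1−Sβ) + 1) ~ 2L/log L. -/
theorem stmt18 (S : ℕ) (hS : 0 < S) :
    Tendsto (fun L : ℕ =>
      (((2*(L : ℝ) + (S : ℝ) - 2) /
          |Real.log ((-(L : ℝ) + Real.sqrt ((L : ℝ)^2 + 4*S)) / (2*S))|) *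
        ((max |(-(L : ℝ) - 2*S + Real.sqrt ((L : ℝ)^2 + 4*S)) / (2*Real.sqrt ((L : ℝ)^2 + 4*S))|
              |(-(L : ℝ) - 2*S + Real.sqrt ((L : ℝ)^2 + 4*S)) / (2*Real.sqrt ((L : ℝ)^2 + 4*S))
                + ((L : ℝ) + (S : ℝ) - 2) *
                  ((-(L : ℝ) + Real.sqrt ((L : ℝ)^2 + 4*S)) / (2*Real.sqrt ((L : ℝ)^2 + 4*S)))|)
            / (1 - (S : ℝ) * ((-(L : ℝ) + Real.sqrt ((L : ℝ)^2 + 4*S)) / (2*S))) + 1))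
        / (2*(L : ℝ) / Real.log (L : ℝ)))
      atTop (nhds 1) := by
  have hs : (1:ℝ) ≤ (S:ℝ) := by exact_mod_cast hS
  have hs0 : (0:ℝ) < (S:ℝ) := by linarith
  -- basic tendsto facts
  have hLt : Tendsto (fun L : ℕ => (L:ℝ)) atTop atTop := tendsto_natCast_atTop_atTop
  have hinv : ∀ c : ℝ, Tendsto (fun L : ℕ => c/(L:ℝ)) atTop (nhds 0) :=
    fun c => Tendsto.div_atTop tendsto_const_nhds hLt
  have hinv2 : ∀ c : ℝ, Tendsto (fun L : ℕ => c/(L:ℝ)^2) atTop (nhds 0) :=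
    fun c => Tendsto.div_atTop tendsto_const_nhds
      ((Filter.tendsto_pow_atTop (two_ne_zero)).comp hLt)
  -- eventual facts
  have hev : ∀ᶠ L : ℕ in atTop, (2:ℝ) ≤ (L:ℝ) := by
    filter_upwards [eventually_ge_atTop 2] with L hL
    exact_mod_cast hL
  -- rewrite the function as a product of three factors
  have hfun : (fun L : ℕ =>
      (((2*(L : ℝ) + (S : ℝ) - 2) / |Real.log (betF S L)|) *
        (RRF S L / (1 - (S:ℝ) * betF S L) + 1)) / (2*(L : ℝ) / Real.log (L : ℝ)))
      = fun L : ℕ =>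
        ((2*(L:ℝ) + (S:ℝ) - 2) / (2*(L:ℝ))) *
        (Real.log (L:ℝ) / |Real.log (betF S L)|) *
        (RRF S L / (1 - (S:ℝ) * betF S L) + 1) := by
    funext L
    simp only [div_eq_mul_inv, mul_inv, inv_inv]; ring
  show Tendsto (fun L : ℕ =>
      (((2*(L : ℝ) + (S : ℝ) - 2) / |Real.log (betF S L)|) *
        (RRF S L / (1 - (S:ℝ) * betF S L) + 1)) / (2*(L : ℝ) / Real.log (L : ℝ)))
      atTop (nhds 1)
  rw [hfun]
  -- factor 1
  have h1 : Tendsto (fun L : ℕ => (2*(L:ℝ) + (S:ℝ) - 2) / (2*(L:ℝ))) atTop (nhds 1) := by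
    have hb : Tendsto (fun L : ℕ => 1 + ((S:ℝ) - 2)/(2*(L:ℝ))) atTop (nhds (1 + 0)) := by
      refine tendsto_const_nhds.add ?_
      exact Tendsto.div_atTop tendsto_const_nhds (hLt.const_mul_atTop two_pos)
    rw [add_zero] at hb
    refine hb.congr' ?_
    filter_upwards [hev] with L hx
    field_simp
    ring
  -- key per-L bounds
  have key : ∀ L : ℕ, (2:ℝ) ≤ (L:ℝ) →
      (0 < betF S L ∧ betF S L ≤ 1/(L:ℝ) ∧ 1/((L:ℝ)+(S:ℝ)) ≤ betF S L) ∧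
      (|tauF S L| ≤ (S:ℝ)/(L:ℝ) ∧ 0 ≤ lamF S L ∧ lamF S L ≤ (S:ℝ)/(L:ℝ)^2) := by
    intro L hx
    set x : ℝ := (L:ℝ)
    have hx0 : (0:ℝ) < x := by linarith
    have hr1 : x < rtF S L := lemA (S:ℝ) x hs hx
    have hr2 : rtF S L ≤ x + 2*(S:ℝ)/x := lemB (S:ℝ) x hs hx
    have hr3 : x + 2*(S:ℝ)/(x+(S:ℝ)) ≤ rtF S L := lemC (S:ℝ) x hs hx
    have hr0 : (0:ℝ) < rtF S L := lt_trans hx0 hr1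
    have hxs : (0:ℝ) < x + (S:ℝ) := by linarith
    have hb0 : 0 < betF S L := by
      unfold betF; apply div_pos (by linarith) (by linarith)
    have hbU : betF S L ≤ 1/x := by
      unfold betF
      rw [div_le_div_iff₀ (by linarith) hx0]
      have h4 : (rtF S L - x) * x ≤ 2*(S:ℝ) := by
        have := mul_le_mul_of_nonneg_right (sub_le_sub_right hr2 x) (le_of_lt hx0)
        calc (rtF S L - x) * x ≤ (2*(S:ℝ)/x) * x := by
              apply mul_le_mul_of_nonneg_right _ (le_of_lt hx0); linarith
          _ = 2*(S:ℝ) := by field_simp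
      nlinarith [h4]
    have hbL : 1/(x+(S:ℝ)) ≤ betF S L := by
      unfold betF
      rw [div_le_div_iff₀ hxs (by linarith)]
      have h4 : 2*(S:ℝ) ≤ (rtF S L - x) * (x+(S:ℝ)) := by
        have h5 : 2*(S:ℝ)/(x+(S:ℝ)) ≤ rtF S L - x := by linarith
        calc (2*(S:ℝ)) = (2*(S:ℝ)/(x+(S:ℝ))) * (x+(S:ℝ)) := by field_simp
          _ ≤ (rtF S L - x) * (x+(S:ℝ)) :=
              mul_le_mul_of_nonneg_right h5 (le_of_lt hxs)
      nlinarith [h4]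
    have htau : |tauF S L| ≤ (S:ℝ)/x := by
      unfold tauF
      rw [abs_div, abs_of_pos (by linarith : (0:ℝ) < 2 * rtF S L)]
      rw [div_le_div_iff₀ (by linarith) hx0]
      have habs : |(-x - 2*(S:ℝ) + rtF S L)| ≤ 2*(S:ℝ) := by
        rw [abs_le]
        constructor
        · linarith
        · have h5 : 2*(S:ℝ)/x ≤ 2*(S:ℝ) := by
            rw [div_le_iff₀ hx0]; nlinarith
          linarith
      calc |(-x - 2*(S:ℝ) + rtF S L)| * x ≤ 2*(S:ℝ) * x :=
            mul_le_mul_of_nonneg_right habs (le_of_lt hx0)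
        _ ≤ (S:ℝ) * (2 * rtF S L) := by nlinarith
    have hlam0 : 0 ≤ lamF S L := by
      unfold lamF; apply div_nonneg (by linarith) (by linarith)
    have hlam : lamF S L ≤ (S:ℝ)/x^2 := by
      unfold lamF
      rw [div_le_div_iff₀ (by linarith) (by positivity)]
      have h4 : (rtF S L - x) * x ≤ 2*(S:ℝ) := by
        calc (rtF S L - x) * x ≤ (2*(S:ℝ)/x) * x := by
              apply mul_le_mul_of_nonneg_right _ (le_of_lt hx0); linarith
          _ = 2*(S:ℝ) := by field_simp
      nlinarith [h4, mul_le_mul_of_nonneg_right h4 (le_of_lt hx0)]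
    exact ⟨⟨hb0, hbU, hbL⟩, htau, hlam0, hlam⟩
  -- factor 2 : log L / |log β| → 1
  have h2 : Tendsto (fun L : ℕ => Real.log (L:ℝ) / |Real.log (betF S L)|) atTop (nhds 1) := by
    set C : ℝ := Real.log ((S:ℝ) + 1) with hC
    have hC0 : 0 < C := Real.log_pos (by linarith)
    have hlog : Tendsto (fun L : ℕ => Real.log (L:ℝ)) atTop atTop :=
      Real.tendsto_log_atTop.comp hLt
    have hlo : Tendsto (fun L : ℕ => Real.log (L:ℝ) / (Real.log (L:ℝ) + C)) atTop (nhds 1) := by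
      have hden : Tendsto (fun L : ℕ => Real.log (L:ℝ) + C) atTop atTop :=
        tendsto_atTop_add_const_right _ C hlog
      have hq : Tendsto (fun L : ℕ => 1 - C/(Real.log (L:ℝ) + C)) atTop (nhds (1 - 0)) :=
        tendsto_const_nhds.sub (Tendsto.div_atTop tendsto_const_nhds hden)
      rw [sub_zero] at hq
      refine hq.congr' ?_
      filter_upwards [hden.eventually_ge_atTop 1] with L hd
      have hd0 : Real.log (L:ℝ) + C ≠ 0 := by linarith
      field_simp; ring
    refine tendsto_of_tendsto_of_tendsto_of_le_of_le' hlo tendsto_const_nhds ?_ ?_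
    · filter_upwards [hev] with L hx
      obtain ⟨⟨hb0, hbU, hbL⟩, _⟩ := key L hx
      have hx0 : (0:ℝ) < (L:ℝ) := by linarith
      have hlogx : 0 < Real.log (L:ℝ) := Real.log_pos (by linarith)
      have hβ1 : betF S L < 1 := lt_of_le_of_lt hbU (by rw [div_lt_one hx0]; linarith)
      have hlogβ : Real.log (betF S L) < 0 := Real.log_neg hb0 hβ1
      have hBup : |Real.log (betF S L)| ≤ Real.log (L:ℝ) + C := by
        rw [abs_of_neg hlogβ]
        have h6 : Real.log (1/((L:ℝ)+(S:ℝ))) ≤ Real.log (betF S L) :=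
          Real.log_le_log (by positivity) hbL
        rw [one_div, Real.log_inv] at h6
        have h7 : Real.log ((L:ℝ)+(S:ℝ)) ≤ Real.log (L:ℝ) + C := by
          have h8 : (L:ℝ)+(S:ℝ) ≤ (L:ℝ) * ((S:ℝ)+1) := by nlinarith
          calc Real.log ((L:ℝ)+(S:ℝ)) ≤ Real.log ((L:ℝ) * ((S:ℝ)+1)) :=
                Real.log_le_log (by linarith) h8
            _ = Real.log (L:ℝ) + C := Real.log_mul (by linarith) (by linarith)
        linarith
      have hBpos : 0 < |Real.log (betF S L)| := abs_pos.mpr (ne_of_lt hlogβ)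
      exact div_le_div_of_nonneg_left (le_of_lt hlogx) hBpos hBup
    · filter_upwards [hev] with L hx
      obtain ⟨⟨hb0, hbU, hbL⟩, _⟩ := key L hx
      have hx0 : (0:ℝ) < (L:ℝ) := by linarith
      have hβ1 : betF S L < 1 := lt_of_le_of_lt hbU (by rw [div_lt_one hx0]; linarith)
      have hlogβ : Real.log (betF S L) < 0 := Real.log_neg hb0 hβ1
      have hBlow : Real.log (L:ℝ) ≤ |Real.log (betF S L)| := by
        rw [abs_of_neg hlogβ]
        have h6 : Real.log (betF S L) ≤ Real.log (1/(L:ℝ)) :=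
          Real.log_le_log hb0 hbU
        rw [one_div, Real.log_inv] at h6
        linarith
      have hBpos : 0 < |Real.log (betF S L)| := abs_pos.mpr (ne_of_lt hlogβ)
      rw [div_le_one hBpos]
      exact hBlow
  -- factor 3 : R/(1-Sβ) + 1 → 1
  have h3 : Tendsto (fun L : ℕ => RRF S L / (1 - (S:ℝ) * betF S L) + 1) atTop (nhds 1) := by
    have hR : Tendsto (fun L : ℕ => RRF S L) atTop (nhds 0) := by
      have hub : Tendsto (fun L : ℕ =>
          (S:ℝ)/(L:ℝ) + ((S:ℝ)/(L:ℝ) + ((S:ℝ)^2/(L:ℝ)^2))) atTop (nhds (0 + (0 + 0))) :=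
        (hinv _).add ((hinv _).add (hinv2 _))
      rw [add_zero, add_zero] at hub
      refine tendsto_of_tendsto_of_tendsto_of_le_of_le' tendsto_const_nhds hub ?_ ?_
      · filter_upwards with L
        exact le_trans (abs_nonneg _) (le_max_left _ _)
      · filter_upwards [hev] with L hx
        obtain ⟨_, htau, hlam0, hlam⟩ := key L hx
        have hx0 : (0:ℝ) < (L:ℝ) := by linarith
        have hm0 : (0:ℝ) ≤ (L:ℝ) + (S:ℝ) - 2 := by linarith
        have hml : ((L:ℝ)+(S:ℝ)-2) * lamF S L ≤ ((L:ℝ)+(S:ℝ)) * ((S:ℝ)/(L:ℝ)^2) :=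
          mul_le_mul (by linarith) hlam hlam0 (by linarith)
        have heq2 : ((L:ℝ)+(S:ℝ)) * ((S:ℝ)/(L:ℝ)^2) = (S:ℝ)/(L:ℝ) + (S:ℝ)^2/(L:ℝ)^2 := by
          field_simp
      -- bound the max by the sum
        apply max_le
        · have h9 : (0:ℝ) ≤ (S:ℝ)/(L:ℝ) := by positivity
          have h10 : (0:ℝ) ≤ (S:ℝ)^2/(L:ℝ)^2 := by positivity
          linarith
        · have h8 : |tauF S L + ((L:ℝ)+(S:ℝ)-2) * lamF S L|
              ≤ |tauF S L| + ((L:ℝ)+(S:ℝ)-2) * lamF S L := by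
            calc |tauF S L + ((L:ℝ)+(S:ℝ)-2) * lamF S L|
                ≤ |tauF S L| + |((L:ℝ)+(S:ℝ)-2) * lamF S L| := abs_add_le _ _
              _ = |tauF S L| + ((L:ℝ)+(S:ℝ)-2) * lamF S L := by
                  rw [abs_of_nonneg (mul_nonneg hm0 hlam0)]
          rw [heq2] at hml
          linarith
    have hD : Tendsto (fun L : ℕ => 1 - (S:ℝ) * betF S L) atTop (nhds 1) := by
      have hq : Tendsto (fun L : ℕ => 1 - (S:ℝ)*(1/(L:ℝ))) atTop (nhds (1 - (S:ℝ)*0)) :=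
        tendsto_const_nhds.sub (tendsto_const_nhds.mul (hinv 1))
      rw [mul_zero, sub_zero] at hq
      refine tendsto_of_tendsto_of_tendsto_of_le_of_le' hq tendsto_const_nhds ?_ ?_
      · filter_upwards [hev] with L hx
        obtain ⟨⟨hb0, hbU, _⟩, _⟩ := key L hx
        have : (S:ℝ) * betF S L ≤ (S:ℝ) * (1/(L:ℝ)) :=
          mul_le_mul_of_nonneg_left hbU (le_of_lt hs0)
        linarith
      · filter_upwards [hev] with L hx
        obtain ⟨⟨hb0, _, _⟩, _⟩ := key L hx
        nlinarith [mul_pos hs0 hb0]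
    have := (hR.div hD one_ne_zero).add (tendsto_const_nhds (x := (1:ℝ)))
    rw [zero_div, zero_add] at this
    exact this
  have := (h1.mul h2).mul h3
  rw [mul_one, mul_one] at this
  exact this
end
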